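/- If α ∈ (0,1) is irrational with continued fraction partial quotients a_i = ⌈(i+10)(log i)²⌉ for all i ≥ 2, then the series ∑_{k=1}^∞ 2‖q_k α‖ converges and its sum is less than 1. -/

import Mathlib

open Filter MeasureTheory

/-- Distance from a real number to the nearest integer. -/
noncomputable def nd (x : ℝ) : ℝ := |x - round x|

/-- Iterates of the Gauss map starting at `α`. -/
noncomputable def gaussIter (α : ℝ) : ℕ → ℝ
  | 0 => α
  | n + 1 => Int.fract (1 / gaussIter α n)

/-- `pq α k` is the partial quotient `a_{k+1}` of the continued fraction of `α ∈ (0,1)`. -/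
noncomputable def pq (α : ℝ) (k : ℕ) : ℕ := (⌊1 / gaussIter α k⌋).toNat

/-- The continued fraction denominators `q_k` of `α`: `q_0 = 1`, `q_1 = a_1`,
`q_{k+1} = a_{k+1} q_k + q_{k-1}`. -/
noncomputable def qd (α : ℝ) : ℕ → ℕ
  | 0 => 1
  | 1 => pq α 0
  | n + 2 => pq α (n + 1) * qd α (n + 1) + qd α n

/-- Numerators of convergents. -/
noncomputable def pnum (α : ℝ) : ℕ → ℕ
  | 0 => 0
  | 1 => 1
  | n + 2 => pq α (n + 1) * pnum α (n + 1) + pnum α n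

/-- Product of Gauss iterates. -/
noncomputable def Bprod (α : ℝ) (n : ℕ) : ℝ := ∏ i ∈ Finset.range (n + 1), gaussIter α i

lemma gauss_mem (α : ℝ) (hirr : Irrational α) (h0 : 0 < α) (h1 : α < 1) :
    ∀ n, Irrational (gaussIter α n) ∧ 0 < gaussIter α n ∧ gaussIter α n < 1 := by
  intro n
  induction n with
  | zero => exact ⟨hirr, h0, h1⟩
  | succ n ih =>
    obtain ⟨hi, hp, hl⟩ := ih
    have hinv : Irrational (1 / gaussIter α n) := by
      rw [one_div]; exact hi.inv
    have hfr : Irrational (Int.fract (1 / gaussIter α n)) := by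
      rw [Int.fract]; exact hinv.sub_intCast _
    refine ⟨by simpa [gaussIter] using hfr, ?_, ?_⟩
    · show 0 < Int.fract (1 / gaussIter α n)
      rcases lt_or_eq_of_le (Int.fract_nonneg (1 / gaussIter α n)) with h | h
      · exact h
      · exfalso
        have hfr0 : Irrational (Int.fract (1 / gaussIter α n)) := hfr
        exact hfr0.ne_int 0 (by simpa using h.symm)
    · exact Int.fract_lt_one _

lemma key_rel (α : ℝ) (hirr : Irrational α) (h0 : 0 < α) (h1 : α < 1) (n : ℕ) :
    (pq α n : ℝ) + gaussIter α (n + 1) = 1 / gaussIter α n ∧ 1 ≤ pq α n := by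
  obtain ⟨hi, hp, hl⟩ := gauss_mem α hirr h0 h1 n
  have hgt : 1 < 1 / gaussIter α n := (one_lt_one_div hp hl)
  have hfl : 1 ≤ ⌊1 / gaussIter α n⌋ := by
    rw [Int.le_floor]; exact_mod_cast hgt.le
  constructor
  · have : (pq α n : ℝ) = (⌊1 / gaussIter α n⌋ : ℝ) := by
      rw [pq]; exact_mod_cast congrArg Int.cast (Int.toNat_of_nonneg (by omega))
    rw [this]
    show (⌊1 / gaussIter α n⌋ : ℝ) + Int.fract (1 / gaussIter α n) = _
    rw [Int.fract]; ring
  · rw [pq]; omega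

lemma main_ident (α : ℝ) (hirr : Irrational α) (h0 : 0 < α) (h1 : α < 1) :
    ∀ n, (qd α n : ℝ) * α - pnum α n = (-1) ^ n * Bprod α n := by
  have P01 : ∀ n, ((qd α n : ℝ) * α - pnum α n = (-1) ^ n * Bprod α n) ∧
      ((qd α (n+1) : ℝ) * α - pnum α (n+1) = (-1) ^ (n+1) * Bprod α (n+1)) := by
    intro n
    induction n with
    | zero =>
      constructor
      · simp [qd, pnum, Bprod, gaussIter]
      · have hk := (key_rel α hirr h0 h1 0).1
        have hα : gaussIter α 0 = α := rfl
        rw [hα] at hk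
        have hne : α ≠ 0 := ne_of_gt h0
        have h1' : α * ((pq α 0 : ℝ) + gaussIter α 1) = 1 := by
          rw [hk]; field_simp
        simp only [qd, pnum, Bprod, pow_one, Nat.cast_one]
        rw [Finset.prod_range_succ, Finset.prod_range_one, hα]
        linear_combination h1'
    | succ n ih =>
      obtain ⟨hP0, hP1⟩ := ih
      refine ⟨hP1, ?_⟩
      have hk := (key_rel α hirr h0 h1 (n + 1)).1
      obtain ⟨_, hbp, _⟩ := gauss_mem α hirr h0 h1 (n + 1)
      have hne : gaussIter α (n + 1) ≠ 0 := ne_of_gt hbp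
      have h1' : gaussIter α (n + 1) * ((pq α (n + 1) : ℝ) + gaussIter α (n + 2)) = 1 := by
        rw [hk]; field_simp
      have hq : (qd α (n + 2) : ℝ) = (pq α (n + 1) : ℝ) * (qd α (n + 1) : ℝ) + (qd α n : ℝ) := by
        rw [qd]; push_cast; ring
      have hpn : (pnum α (n + 2) : ℝ) = (pq α (n + 1) : ℝ) * (pnum α (n + 1) : ℝ) + (pnum α n : ℝ) := by
        rw [pnum]; push_cast; ring
      have hB1 : Bprod α (n + 1) = Bprod α n * gaussIter α (n + 1) := by
        rw [Bprod, Bprod, Finset.prod_range_succ]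
      have hB2 : Bprod α (n + 2) = Bprod α n * gaussIter α (n + 1) * gaussIter α (n + 2) := by
        rw [Bprod, Bprod, Finset.prod_range_succ, Finset.prod_range_succ]
      rw [hq, hpn, hB2]
      rw [hB1] at hP1
      have e1 : ((-1:ℝ)) ^ (n + 1) = -(-1) ^ n := by ring
      have e2 : ((-1:ℝ)) ^ (n + 2) = (-1) ^ n := by ring
      rw [e1] at hP1
      rw [e2]
      linear_combination (pq α (n+1) : ℝ) * hP1 + hP0 - (-1:ℝ)^n * Bprod α n * h1'
  exact fun n => (P01 n).1

lemma Bprod_pos (α : ℝ) (hirr : Irrational α) (h0 : 0 < α) (h1 : α < 1) (n : ℕ) :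
    0 < Bprod α n := by
  apply Finset.prod_pos
  exact fun i _ => (gauss_mem α hirr h0 h1 i).2.1

lemma gauss_lt_inv_pq (α : ℝ) (hirr : Irrational α) (h0 : 0 < α) (h1 : α < 1) (n : ℕ) :
    (pq α n : ℝ) * gaussIter α n < 1 := by
  obtain ⟨hk, _⟩ := key_rel α hirr h0 h1 n
  obtain ⟨_, hp, _⟩ := gauss_mem α hirr h0 h1 n
  obtain ⟨_, hp1, _⟩ := gauss_mem α hirr h0 h1 (n + 1)
  have : gaussIter α n * ((pq α n : ℝ) + gaussIter α (n + 1)) = 1 := by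
    rw [hk]; field_simp
  nlinarith

theorem stmt2 (α : ℝ) (hirr : Irrational α) (h0 : 0 < α) (h1 : α < 1)
    (ha : ∀ i : ℕ, 2 ≤ i → (pq α (i - 1) : ℤ) = ⌈((i : ℝ) + 10) * Real.log i ^ 2⌉) :
    Summable (fun k : ℕ => 2 * nd ((qd α (k + 1) : ℝ) * α)) ∧
      ∑' k : ℕ, 2 * nd ((qd α (k + 1) : ℝ) * α) < 1 := by
  -- pq α 1 ≥ 6
  have ha2 : (6 : ℤ) ≤ (pq α 1 : ℤ) := by
    rw [ha 2 (by norm_num)]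
    have hl2 := Real.log_two_gt_d9
    rw [Int.le_ceil_iff]
    push_cast
    nlinarith [Real.log_two_gt_d9]
  have hpq1 : (6 : ℝ) ≤ (pq α 1 : ℝ) := by exact_mod_cast ha2
  -- pq α k ≥ 2 for k ≥ 2
  have hpq2 : ∀ k : ℕ, 2 ≤ k → (2 : ℝ) ≤ (pq α k : ℝ) := by
    intro k hk
    have h3 : (3 : ℕ) ≤ k + 1 := by omega
    have := ha (k + 1) (by omega)
    simp only [Nat.add_sub_cancel] at this
    have hlog3 : (1 : ℝ) < Real.log 3 := by
      rw [Real.lt_log_iff_exp_lt (by norm_num)]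
      calc Real.exp 1 < 2.7182818286 := Real.exp_one_lt_d9
        _ < 3 := by norm_num
    have hlogk : Real.log 3 ≤ Real.log (k + 1 : ℕ) := by
      apply Real.log_le_log (by norm_num)
      exact_mod_cast h3
    have hlogk1 : (1 : ℝ) < Real.log (k + 1 : ℕ) := lt_of_lt_of_le hlog3 hlogk
    have hc : (1 : ℝ) < ((k + 1 : ℕ) : ℝ) + 10 := by
      push_cast; linarith [Nat.cast_nonneg (α := ℝ) k]
    have this2 : (2 : ℤ) ≤ ⌈(((k + 1 : ℕ) : ℝ) + 10) * Real.log (k + 1 : ℕ) ^ 2⌉ := by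
      rw [Int.le_ceil_iff]
      push_cast at hlogk1 hc ⊢
      have hsq : 1 ≤ Real.log ((k:ℝ) + 1) ^ 2 := by nlinarith
      nlinarith
    have h2 : (2 : ℤ) ≤ (pq α k : ℤ) := by rw [this]; exact this2
    exact_mod_cast h2
  -- basic gauss bounds
  have hb1 : gaussIter α 1 < 1 / 6 := by
    have h := gauss_lt_inv_pq α hirr h0 h1 1
    obtain ⟨_, hp, _⟩ := gauss_mem α hirr h0 h1 1
    nlinarith
  have hbk : ∀ k : ℕ, 2 ≤ k → gaussIter α k ≤ 1 / 2 := by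
    intro k hk
    have h := gauss_lt_inv_pq α hirr h0 h1 k
    obtain ⟨_, hp, _⟩ := gauss_mem α hirr h0 h1 k
    have := hpq2 k hk
    nlinarith
  -- product bound
  have hBb : ∀ k : ℕ, Bprod α (k + 1) ≤ 1 / 6 * (1 / 2) ^ k := by
    intro k
    induction k with
    | zero =>
      obtain ⟨_, hp0, hl0⟩ := gauss_mem α hirr h0 h1 0
      obtain ⟨_, hp1, _⟩ := gauss_mem α hirr h0 h1 1
      have : Bprod α 1 = gaussIter α 0 * gaussIter α 1 := by
        rw [Bprod, Finset.prod_range_succ, Finset.prod_range_one]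
      rw [this]
      simp only [pow_zero, mul_one]
      nlinarith
    | succ k ih =>
      have hB : Bprod α (k + 2) = Bprod α (k + 1) * gaussIter α (k + 2) := by
        rw [Bprod, Bprod, Finset.prod_range_succ]
      obtain ⟨_, hp2, _⟩ := gauss_mem α hirr h0 h1 (k + 2)
      have hle := hbk (k + 2) (by omega)
      have hBpos := Bprod_pos α hirr h0 h1 (k + 1)
      rw [hB]
      calc Bprod α (k + 1) * gaussIter α (k + 2) ≤ (1 / 6 * (1 / 2) ^ k) * (1 / 2) := by
            apply mul_le_mul ih hle (le_of_lt hp2)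
            positivity
        _ = 1 / 6 * (1 / 2) ^ (k + 1) := by ring
  -- nd equals Bprod
  have hnd : ∀ k : ℕ, nd ((qd α (k + 1) : ℝ) * α) = Bprod α (k + 1) := by
    intro k
    set e : ℝ := (qd α (k + 1) : ℝ) * α - (pnum α (k + 1) : ℝ) with he
    have hident := main_ident α hirr h0 h1 (k + 1)
    have hBpos := Bprod_pos α hirr h0 h1 (k + 1)
    have habs : |e| = Bprod α (k + 1) := by
      rw [he, hident, abs_mul, abs_pow, abs_neg, abs_one, one_pow, one_mul,
        abs_of_pos hBpos]
    have hsmall : |e| < 1 / 2 := by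
      rw [habs]
      calc Bprod α (k + 1) ≤ 1 / 6 * (1 / 2) ^ k := hBb k
        _ ≤ 1 / 6 * 1 := by
            apply mul_le_mul_of_nonneg_left _ (by norm_num)
            exact pow_le_one₀ (by norm_num) (by norm_num)
        _ < 1 / 2 := by norm_num
    have hx : (qd α (k + 1) : ℝ) * α = e + ((pnum α (k + 1) : ℤ) : ℝ) := by
      rw [he]; push_cast; ring
    have hround : round ((qd α (k + 1) : ℝ) * α) = round e + (pnum α (k + 1) : ℤ) := by
      rw [hx, round_add_intCast]
    have hre : round e = 0 := by
      rw [round_eq_zero_iff]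
      constructor
      · linarith [neg_abs_le e]
      · linarith [le_abs_self e]
    rw [nd, hround, hre, hx]
    push_cast
    rw [show e + (pnum α (k + 1) : ℝ) - (0 + (pnum α (k + 1) : ℝ)) = e by ring]
    exact habs
  -- conclude
  have hle : ∀ k : ℕ, 2 * nd ((qd α (k + 1) : ℝ) * α) ≤ 1 / 3 * (1 / 2) ^ k := by
    intro k
    rw [hnd k]
    have := hBb k
    nlinarith
  have hnonneg : ∀ k : ℕ, 0 ≤ 2 * nd ((qd α (k + 1) : ℝ) * α) := by
    intro k
    rw [nd]
    positivity
  have hg : Summable (fun k : ℕ => 1 / 3 * (1 / 2 : ℝ) ^ k) :=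
    summable_geometric_two.mul_left _
  have hf : Summable (fun k : ℕ => 2 * nd ((qd α (k + 1) : ℝ) * α)) :=
    Summable.of_nonneg_of_le hnonneg hle hg
  refine ⟨hf, ?_⟩
  calc ∑' k : ℕ, 2 * nd ((qd α (k + 1) : ℝ) * α) ≤ ∑' k : ℕ, 1 / 3 * (1 / 2 : ℝ) ^ k :=
        Summable.tsum_le_tsum hle hf hg
    _ = 1 / 3 * 2 := by rw [tsum_mul_left, tsum_geometric_two]
    _ < 1 := by norm_num
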